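/- The tent map cascade is strongly mixing: for any two nonempty open subsets U, V of I = [0,1], the set {n ∈ ℕ : f^[n] '' U ∩ V ≠ ∅} is cofinite in ℕ (its complement in ℕ is finite). -/

import Mathlib

open Set

/-- The tent map `f(x) = 1 - |1 - 2x|` on `I = [0,1]`. -/
noncomputable def tentMap (x : unitInterval) : unitInterval :=
  ⟨1 - |1 - 2 * (x : ℝ)|, by
    obtain ⟨h0, h1⟩ := x.2
    constructor
    · have h : |1 - 2 * (x : ℝ)| ≤ 1 := abs_le.mpr ⟨by linarith, by linarith⟩
      linarith
    · have h : (0 : ℝ) ≤ |1 - 2 * (x : ℝ)| := abs_nonneg _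
      linarith⟩

noncomputable def tentR (x : ℝ) : ℝ := 1 - |1 - 2 * x|

lemma tentR_left {x : ℝ} (h : x ≤ 1/2) : tentR x = 2 * x := by
  unfold tentR; rw [abs_of_nonneg (by linarith)]; ring

lemma tentR_right {x : ℝ} (h : 1/2 ≤ x) : tentR x = 2 - 2 * x := by
  unfold tentR; rw [abs_of_nonpos (by linarith)]; ring

lemma image_Icc_left {a b : ℝ} (hab : a ≤ b) (hb : b ≤ 1/2) :
    tentR '' Icc a b = Icc (2*a) (2*b) := by
  ext y; constructor
  · rintro ⟨x, hx, rfl⟩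
    rw [tentR_left (le_trans hx.2 hb)]
    exact ⟨by linarith [hx.1], by linarith [hx.2]⟩
  · rintro ⟨h1, h2⟩
    exact ⟨y/2, ⟨by linarith, by linarith⟩, by rw [tentR_left (by linarith)]; ring⟩

lemma image_Icc_right {a b : ℝ} (hab : a ≤ b) (ha : 1/2 ≤ a) :
    tentR '' Icc a b = Icc (2 - 2*b) (2 - 2*a) := by
  ext y; constructor
  · rintro ⟨x, hx, rfl⟩
    rw [tentR_right (le_trans ha hx.1)]
    exact ⟨by linarith [hx.2], by linarith [hx.1]⟩
  · rintro ⟨h1, h2⟩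
    exact ⟨(2-y)/2, ⟨by linarith, by linarith⟩, by rw [tentR_right (by linarith)]; ring⟩

lemma tentR_image_unit : tentR '' Icc (0:ℝ) 1 = Icc 0 1 := by
  have h : Icc (0:ℝ) 1 = Icc 0 (1/2) ∪ Icc (1/2) 1 :=
    (Set.Icc_union_Icc_eq_Icc (by norm_num) (by norm_num)).symm
  rw [h, Set.image_union, image_Icc_left (by norm_num) le_rfl,
    image_Icc_right (show (1:ℝ)/2 ≤ 1 by norm_num) le_rfl]
  norm_num

lemma tentR_iter_unit (n : ℕ) : tentR^[n] '' Icc (0:ℝ) 1 = Icc 0 1 := by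
  induction n with
  | zero => simp
  | succ n ih => rw [Function.iterate_succ, Set.image_comp, tentR_image_unit, ih]

lemma dyadic_image (n : ℕ) : ∀ k : ℕ, k + 1 ≤ 2^n →
    tentR^[n] '' Icc ((k:ℝ)/2^n) (((k:ℝ)+1)/2^n) = Icc 0 1 := by
  induction n with
  | zero =>
    intro k hk
    have : k = 0 := by omega
    subst this; norm_num
  | succ n ih =>
    intro k hk
    have hpos : (0:ℝ) < 2^(n+1) := by positivity
    have hpos' : (0:ℝ) < 2^n := by positivity
    have hab : ((k:ℝ))/2^(n+1) ≤ ((k:ℝ)+1)/2^(n+1) := by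
      gcongr; linarith
    rw [Function.iterate_succ, Set.image_comp]
    by_cases hc : k + 1 ≤ 2^n
    · have h2 : (k:ℝ) + 1 ≤ 2^n := by exact_mod_cast hc
      have hb : ((k:ℝ)+1)/2^(n+1) ≤ 1/2 := by
        rw [div_le_iff₀ hpos, pow_succ]; linarith
      rw [image_Icc_left hab hb]
      have e1 : 2 * ((k:ℝ)/2^(n+1)) = (k:ℝ)/2^n := by
        rw [pow_succ]; field_simp
      have e2 : 2 * (((k:ℝ)+1)/2^(n+1)) = ((k:ℝ)+1)/2^n := by
        rw [pow_succ]; field_simp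
      rw [e1, e2]; exact ih k hc
    · have hp : 2^(n+1) = 2 * 2^n := by rw [pow_succ]; ring
      have hk' : 2^n ≤ k := by omega
      have hk2 : (2:ℝ)^n ≤ (k:ℝ) := by exact_mod_cast hk'
      have ha : 1/2 ≤ (k:ℝ)/2^(n+1) := by
        rw [le_div_iff₀ hpos, pow_succ]; linarith
      rw [image_Icc_right hab ha]
      set m : ℕ := 2^(n+1) - 1 - k with hm
      have hm1 : m + 1 ≤ 2^n := by omega
      have hms : m + 1 + k = 2^(n+1) := by omega
      have hcast : (m:ℝ) + 1 + k = 2^(n+1) := by exact_mod_cast hms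
      have hp2 : (2:ℝ)^(n+1) = 2*2^n := by rw [pow_succ]; ring
      have hmr : (m:ℝ) = 2*2^n - 1 - k := by rw [← hp2]; linarith [hcast]
      have e1 : 2 - 2*(((k:ℝ)+1)/2^(n+1)) = (m:ℝ)/2^n := by
        rw [hp2, hmr]; field_simp; ring
      have e2 : 2 - 2*((k:ℝ)/2^(n+1)) = ((m:ℝ)+1)/2^n := by
        rw [hp2, hmr]; field_simp; ring
      rw [e1, e2]; exact ih m hm1

lemma tent_iter_coe (n : ℕ) (x : unitInterval) :
    ((tentMap^[n] x : unitInterval) : ℝ) = tentR^[n] (x : ℝ) := by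
  induction n generalizing x with
  | zero => simp
  | succ n ih =>
    rw [Function.iterate_succ_apply, Function.iterate_succ_apply, ih]
    rfl

theorem stmt6 (U V : Set unitInterval) (hUo : IsOpen U) (hUne : U.Nonempty)
    (hVo : IsOpen V) (hVne : V.Nonempty) :
    ({n : ℕ | ((tentMap^[n] '' U) ∩ V).Nonempty}ᶜ).Finite := by
  obtain ⟨x, hxU⟩ := hUne
  obtain ⟨ε, hε, hball⟩ := Metric.isOpen_iff.mp hUo x hxU
  -- find a closed interval [a,b] ⊆ [0,1] around x inside the ball
  set a : ℝ := max 0 ((x:ℝ) - ε/2) with hadef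
  set b : ℝ := min 1 ((x:ℝ) + ε/2) with hbdef
  have hx0 : (0:ℝ) ≤ x := x.2.1
  have hx1 : (x:ℝ) ≤ 1 := x.2.2
  have hab : a < b := by
    apply max_lt <;> apply lt_min <;> linarith
  have hsub : ∀ y : ℝ, y ∈ Icc a b → ∃ hy : y ∈ Icc (0:ℝ) 1, (⟨y, hy⟩ : unitInterval) ∈ U := by
    intro y hy
    have h0 : (0:ℝ) ≤ y := le_trans (le_max_left _ _) hy.1
    have h1 : y ≤ 1 := le_trans hy.2 (min_le_left _ _)
    refine ⟨⟨h0, h1⟩, hball ?_⟩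
    have hya : (x:ℝ) - ε/2 ≤ y := le_trans (le_max_right _ _) hy.1
    have hyb : y ≤ (x:ℝ) + ε/2 := le_trans hy.2 (min_le_right _ _)
    simp only [Metric.mem_ball, Subtype.dist_eq, Real.dist_eq]
    rw [abs_lt]; constructor <;> linarith
  -- choose n0 with 2/2^n0 < b - a
  obtain ⟨n0, hn0⟩ := pow_unbounded_of_one_lt (2/(b-a)) (by norm_num : (1:ℝ) < 2)
  have hba : (0:ℝ) < b - a := by linarith
  have hsmall : (2:ℝ)/2^n0 < b - a := by
    rw [div_lt_iff₀ (by positivity)]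
    calc (2:ℝ) = (2/(b-a)) * (b-a) := by field_simp
    _ < 2^n0 * (b-a) := by apply mul_lt_mul_of_pos_right hn0 hba
    _ = (b-a) * 2^n0 := by ring
  set k : ℕ := ⌈a * 2^n0⌉₊ with hkdef
  have hp0 : (0:ℝ) < 2^n0 := by positivity
  have ha0 : (0:ℝ) ≤ a := le_max_left _ _
  have hak : a ≤ (k:ℝ)/2^n0 := by
    rw [le_div_iff₀ hp0]; exact Nat.le_ceil _
  have hkb : ((k:ℝ)+1)/2^n0 < b := by
    rw [div_lt_iff₀ hp0]
    have h1 : (k:ℝ) < a * 2^n0 + 1 := Nat.ceil_lt_add_one (by positivity)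
    have h2 : (2:ℝ) < (b-a) * 2^n0 := by
      rw [div_lt_iff₀ (by positivity)] at hsmall; linarith
    nlinarith
  have hb1 : b ≤ 1 := min_le_left _ _
  have hk2 : k + 1 ≤ 2^n0 := by
    have : ((k:ℝ)+1) < 2^n0 := by
      have := (div_lt_one hp0).mp (lt_of_lt_of_le hkb hb1)
      linarith
    have h : ((k+1:ℕ):ℝ) < ((2^n0 : ℕ):ℝ) := by push_cast; linarith
    exact_mod_cast h.le
  -- the key: for n ≥ n0, the image covers [0,1]
  have hcover : ∀ n, n0 ≤ n → ∀ y : ℝ, y ∈ Icc (0:ℝ) 1 →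
      ∃ w ∈ Icc ((k:ℝ)/2^n0) (((k:ℝ)+1)/2^n0), tentR^[n] w = y := by
    intro n hn y hy
    have heq : tentR^[n] '' Icc ((k:ℝ)/2^n0) (((k:ℝ)+1)/2^n0) = Icc 0 1 := by
      have hsplit : n = (n - n0) + n0 := by omega
      rw [hsplit, Function.iterate_add, Set.image_comp, dyadic_image n0 k hk2,
        tentR_iter_unit]
    rw [← heq] at hy
    obtain ⟨w, hw, hwy⟩ := hy
    exact ⟨w, hw, hwy⟩
  apply Set.Finite.subset (Set.finite_Iio n0)
  intro n hn
  simp only [Set.mem_compl_iff, Set.mem_setOf_eq] at hn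
  by_contra hge
  simp only [Set.mem_Iio, not_lt] at hge
  apply hn
  obtain ⟨v, hvV⟩ := hVne
  obtain ⟨w, hw, hwy⟩ := hcover n hge (v:ℝ) v.2
  have hIcc : Icc ((k:ℝ)/2^n0) (((k:ℝ)+1)/2^n0) ⊆ Icc a b := by
    apply Set.Icc_subset_Icc hak (le_of_lt hkb)
  obtain ⟨hwI, hwU⟩ := hsub w (hIcc hw)
  refine ⟨v, ⟨⟨w, hwI⟩, hwU, ?_⟩, hvV⟩
  apply Subtype.ext
  rw [tent_iter_coe]
  exact hwy
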